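/- Every Vénéreau-type polynomial f = y + xQ, Q ∈ ℂ[x][v,w], is a coordinate of S[y,z,u] for S = ℂ[x,x⁻¹], and its image modulo x is y, a coordinate of ℂ[y,z,u]. -/

import Mathlib

open MvPolynomial LaurentPolynomial

/-- Every Vénéreau-type polynomial f = y + xQ, Q ∈ ℂ[x][v,w], becomes a
coordinate of S[y,z,u] for S = ℂ[x,x⁻¹] (via the inclusion ι : ℂ[x,y,z,u] →
S[y,z,u], x ↦ T 1), and its image modulo x (under π : x ↦ 0) is y, a
coordinate of ℂ[y,z,u]. -/
theorem stmt15 :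
    let x : MvPolynomial (Fin 4) ℂ := X 0
    let y : MvPolynomial (Fin 4) ℂ := X 1
    let z : MvPolynomial (Fin 4) ℂ := X 2
    let u : MvPolynomial (Fin 4) ℂ := X 3
    let p := y * u + z ^ 2
    let v := x * z + y * p
    let w := x ^ 2 * u - 2 * x * z * p - y * p ^ 2
    let S := LaurentPolynomial ℂ
    let ι : MvPolynomial (Fin 4) ℂ →ₐ[ℂ] MvPolynomial (Fin 3) S :=
      aeval ![MvPolynomial.C (T 1), X 0, X 1, X 2]
    let π : MvPolynomial (Fin 4) ℂ →ₐ[ℂ] MvPolynomial (Fin 3) ℂ :=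
      aeval ![0, X 0, X 1, X 2]
    ∀ Q ∈ Algebra.adjoin ℂ ({x, v, w} : Set (MvPolynomial (Fin 4) ℂ)),
      (∃ g h : MvPolynomial (Fin 3) S,
        Algebra.adjoin S ({ι (y + x * Q), g, h} : Set (MvPolynomial (Fin 3) S)) = ⊤) ∧
      π (y + x * Q) = X 0 ∧
      (∃ g h : MvPolynomial (Fin 3) ℂ,
        Algebra.adjoin ℂ ({π (y + x * Q), g, h} : Set (MvPolynomial (Fin 3) ℂ)) = ⊤) := by
  intro x y z u p v w S ι π Q hQ
  have hrange3 : ∀ (R : Type) [CommRing R],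
      ({X 0, X 1, X 2} : Set (MvPolynomial (Fin 3) R)) = Set.range X := by
    intro R _
    ext q
    constructor
    · rintro (rfl | rfl | rfl) <;> exact ⟨_, rfl⟩
    · rintro ⟨i, rfl⟩
      fin_cases i <;> simp
  refine ⟨?_, ?_, ?_⟩
  · -- over S
    set a : MvPolynomial (Fin 3) S := MvPolynomial.C (T 1) with ha
    set b : MvPolynomial (Fin 3) S := MvPolynomial.C (T (-1)) with hb
    have hab : a * b = 1 := by
      rw [ha, hb, ← MvPolynomial.C_mul, ← T_add]
      norm_num
    set P : MvPolynomial (Fin 3) S := X 0 * X 2 + X 1 ^ 2 with hP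
    have hιx : ι x = a := by simp [ι, x]; rfl
    have e3 : (![MvPolynomial.C (T 1), X 0, X 1, X 2] :
        Fin 4 → MvPolynomial (Fin 3) S) 3 = X 2 := rfl
    have e2 : ι 2 = 2 := map_ofNat ι 2
    have hιv : ι v = a * X 1 + X 0 * P := by
      simp only [ι, v, x, y, z, u, p, hP, map_add, map_mul, map_pow, aeval_X]
      simp only [Matrix.cons_val_zero, Matrix.cons_val_one, Matrix.head_cons,
        Matrix.cons_val_two, Matrix.tail_cons, e3]
      rfl
    have hιw : ι w = a ^ 2 * X 2 - 2 * a * X 1 * P - X 0 * P ^ 2 := by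
      simp only [ι, w, x, y, z, u, p, hP, map_add, map_sub, map_mul, map_pow, aeval_X]
      simp only [Matrix.cons_val_zero, Matrix.cons_val_one, Matrix.head_cons,
        Matrix.cons_val_two, Matrix.tail_cons, e3, e2]
      rw [map_ofNat]
    refine ⟨ι v, ι w, ?_⟩
    set A := Algebra.adjoin S ({ι (y + x * Q), ι v, ι w} : Set (MvPolynomial (Fin 3) S)) with hA
    have hFA : ι (y + x * Q) ∈ A := Algebra.subset_adjoin (by simp)
    have hGA : ι v ∈ A := Algebra.subset_adjoin (by simp)
    have hHA : ι w ∈ A := Algebra.subset_adjoin (by simp)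
    have haA : a ∈ A := by
      rw [ha, ← MvPolynomial.algebraMap_eq]; exact A.algebraMap_mem _
    have hbA : b ∈ A := by
      rw [hb, ← MvPolynomial.algebraMap_eq]; exact A.algebraMap_mem _
    have hQA : ι Q ∈ A := by
      have h1 : Algebra.adjoin ℂ (ι '' {x, v, w}) ≤ A.restrictScalars ℂ := by
        apply Algebra.adjoin_le
        rintro _ ⟨t, ht, rfl⟩
        rcases ht with rfl | rfl | rfl
        · show ι x ∈ A; rw [hιx]; exact haA
        · exact hGA
        · exact hHA
      have h2 : ι Q ∈ Algebra.adjoin ℂ (ι '' {x, v, w}) := by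
        rw [← AlgHom.map_adjoin]
        exact ⟨Q, hQ, rfl⟩
      exact h1 h2
    have hYA : (X 0 : MvPolynomial (Fin 3) S) ∈ A := by
      have : (X 0 : MvPolynomial (Fin 3) S) = ι (y + x * Q) - a * ι Q := by
        rw [map_add, map_mul, hιx]
        simp [ι, y]
      rw [this]
      exact A.sub_mem hFA (A.mul_mem haA hQA)
    have hPA : P ∈ A := by
      have : P = b ^ 2 * ((ι v) ^ 2 + X 0 * ι w) := by
        rw [hιv, hιw]
        linear_combination (-(a * b) - 1) * (X 0 * X 2 + X 1 ^ 2 : MvPolynomial (Fin 3) S) * hab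
      rw [this]
      exact A.mul_mem (A.pow_mem hbA 2)
        (A.add_mem (A.pow_mem hGA 2) (A.mul_mem hYA hHA))
    have hZA : (X 1 : MvPolynomial (Fin 3) S) ∈ A := by
      have : (X 1 : MvPolynomial (Fin 3) S) = b * (ι v - X 0 * P) := by
        rw [hιv]
        linear_combination (-(X 1) : MvPolynomial (Fin 3) S) * hab
      rw [this]
      exact A.mul_mem hbA (A.sub_mem hGA (A.mul_mem hYA hPA))
    have hUA : (X 2 : MvPolynomial (Fin 3) S) ∈ A := by
      have : (X 2 : MvPolynomial (Fin 3) S) =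
          b ^ 2 * (ι w + (1 + 1) * a * X 1 * P + X 0 * P ^ 2) := by
        rw [hιw]
        linear_combination (-(a * b) - 1) * (X 2 : MvPolynomial (Fin 3) S) * hab
      rw [this]
      exact A.mul_mem (A.pow_mem hbA 2)
        (A.add_mem (A.add_mem hHA (A.mul_mem (A.mul_mem (A.mul_mem
          (A.add_mem A.one_mem A.one_mem) haA) hZA) hPA)) (A.mul_mem hYA (A.pow_mem hPA 2)))
    refine le_antisymm le_top ?_
    rw [← MvPolynomial.adjoin_range_X]
    apply Algebra.adjoin_le
    rintro _ ⟨i, rfl⟩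
    fin_cases i
    · exact hYA
    · exact hZA
    · exact hUA
  · simp [π, x, y]
  · refine ⟨X 1, X 2, ?_⟩
    have : π (y + x * Q) = X 0 := by simp [π, x, y]
    rw [this, hrange3 ℂ, MvPolynomial.adjoin_range_X]
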